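/- Let γ₁, γ₂ be modulus functions such that there exist constants a, b, δ > 0 with a ≤ γ₁(t)/γ₂(t) ≤ b for all 0 < t < δ. Then for every Lebesgue measurable set A ⊆ ℝ, the set of γ₁-density points of A equals the set of γ₂-density points of A. -/

import Mathlib

open MeasureTheory Set Filter Topology

/-- γ is a modulus function (on [0,∞); values and hypotheses only matter for nonnegative arguments). -/
def IsModulus (γ : ℝ → ℝ) : Prop :=
  (∀ a, 0 ≤ a → 0 ≤ γ a) ∧
  (∀ a, 0 ≤ a → (γ a = 0 ↔ a = 0)) ∧
  (∀ a b, 0 ≤ a → 0 ≤ b → γ (a + b) ≤ γ a + γ b) ∧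
  ContinuousWithinAt γ (Set.Ici 0) 0 ∧
  (∀ a b, 0 ≤ a → a ≤ b → γ a ≤ γ b)

/-- |(x-α, x+α) ∩ Aᶜ| -/
noncomputable def mInt (A : Set ℝ) (x α : ℝ) : ℝ :=
  (volume (Set.Ioo (x - α) (x + α) ∩ Aᶜ)).toReal

/-- x is a γ-density point of A. -/
def IsGammaDensityPt (γ : ℝ → ℝ) (A : Set ℝ) (x : ℝ) : Prop :=
  Tendsto (fun α => γ (mInt A x α) / γ (2 * α)) (𝓝[>] (0:ℝ)) (𝓝 0)

/-- x is a Lebesgue density point of A. -/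
def IsLebDensityPt (A : Set ℝ) (x : ℝ) : Prop :=
  Tendsto (fun α => mInt A x α / (2 * α)) (𝓝[>] (0:ℝ)) (𝓝 0)

lemma mInt_nonneg (A : Set ℝ) (x α : ℝ) : 0 ≤ mInt A x α := ENNReal.toReal_nonneg

lemma mInt_le (A : Set ℝ) (x α : ℝ) (hα : 0 < α) : mInt A x α ≤ 2 * α := by
  have h1 : volume (Set.Ioo (x - α) (x + α) ∩ Aᶜ) ≤ volume (Set.Ioo (x - α) (x + α)) :=
    measure_mono (Set.inter_subset_left)
  have h2 : volume (Set.Ioo (x - α) (x + α)) = ENNReal.ofReal (2 * α) := by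
    rw [Real.volume_Ioo]; ring_nf
  rw [h2] at h1
  have := ENNReal.toReal_mono ENNReal.ofReal_ne_top h1
  rw [ENNReal.toReal_ofReal (by linarith)] at this
  exact this

lemma modulus_pos {γ : ℝ → ℝ} (h : IsModulus γ) {t : ℝ} (ht : 0 < t) : 0 < γ t := by
  rcases h with ⟨hn, hz, -, -, -⟩
  rcases lt_or_eq_of_le (hn t ht.le) with h' | h'
  · exact h'
  · exact absurd (((hz t ht.le).mp h'.symm)) (ne_of_gt ht)

lemma aux_mono {γ₁ γ₂ : ℝ → ℝ} (h₁ : IsModulus γ₁) (h₂ : IsModulus γ₂)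
    {a b δ : ℝ} (ha : 0 < a) (hb : 0 < b) (hδ : 0 < δ)
    (hcomp : ∀ t : ℝ, 0 < t → t < δ → a * γ₂ t ≤ γ₁ t ∧ γ₁ t ≤ b * γ₂ t)
    (A : Set ℝ) (x : ℝ) (h : IsGammaDensityPt γ₁ A x) : IsGammaDensityPt γ₂ A x := by
  have hmem : Set.Ioo (0:ℝ) (δ/2) ∈ 𝓝[>] (0:ℝ) :=
    Ioo_mem_nhdsGT_of_mem ⟨le_rfl, half_pos hδ⟩
  have hlim : Tendsto (fun α => (b/a) * (γ₁ (mInt A x α) / γ₁ (2 * α))) (𝓝[>] (0:ℝ)) (𝓝 0) := by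
    simpa using h.const_mul (b/a)
  apply squeeze_zero' _ _ hlim
  · filter_upwards [hmem] with α hα
    exact div_nonneg (h₂.1 _ (mInt_nonneg A x α)) (h₂.1 _ (by linarith [hα.1]))
  · filter_upwards [hmem] with α hα
    obtain ⟨hα0, hαδ⟩ := hα
    set m := mInt A x α with hm
    have hm0 : 0 ≤ m := mInt_nonneg A x α
    have hmle : m ≤ 2 * α := mInt_le A x α hα0
    have h2α : 0 < 2 * α := by linarith
    have h2αδ : 2 * α < δ := by linarith
    have hc2 := hcomp (2*α) h2α h2αδ
    have hγ₂2 : 0 < γ₂ (2*α) := modulus_pos h₂ h2α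
    have hγ₁2 : 0 < γ₁ (2*α) := modulus_pos h₁ h2α
    have hγ₁m : 0 ≤ γ₁ m := h₁.1 m hm0
    rcases eq_or_lt_of_le hm0 with h0 | h0
    · have : γ₂ m = 0 := (h₂.2.1 m hm0).mpr h0.symm
      rw [this, zero_div]
      positivity
    · have hc1 := hcomp m h0 (lt_of_le_of_lt hmle h2αδ)
      have key : γ₂ m / γ₂ (2*α) ≤ (γ₁ m / a) / (γ₁ (2*α) / b) := by
        apply div_le_div₀ (by positivity)
        · rw [le_div_iff₀ ha]; exact hc1.1.trans_eq' (mul_comm _ _)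
        · positivity
        · rw [div_le_iff₀ hb]; exact hc2.2.trans_eq (mul_comm _ _)
      have heq : (γ₁ m / a) / (γ₁ (2*α) / b) = (b/a) * (γ₁ m / γ₁ (2*α)) := by
        field_simp
      rw [heq] at key
      exact key

theorem stmt3 (γ₁ γ₂ : ℝ → ℝ) (h₁ : IsModulus γ₁) (h₂ : IsModulus γ₂)
    (a b δ : ℝ) (ha : 0 < a) (hb : 0 < b) (hδ : 0 < δ)
    (hcomp : ∀ t : ℝ, 0 < t → t < δ → a ≤ γ₁ t / γ₂ t ∧ γ₁ t / γ₂ t ≤ b)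
    (A : Set ℝ) (hA : MeasurableSet A) :
    {x : ℝ | IsGammaDensityPt γ₁ A x} = {x : ℝ | IsGammaDensityPt γ₂ A x} := by
  have hcomp' : ∀ t : ℝ, 0 < t → t < δ → a * γ₂ t ≤ γ₁ t ∧ γ₁ t ≤ b * γ₂ t := by
    intro t ht htδ
    have hγ₂ : 0 < γ₂ t := modulus_pos h₂ ht
    obtain ⟨hl, hr⟩ := hcomp t ht htδ
    constructor
    · calc a * γ₂ t ≤ (γ₁ t / γ₂ t) * γ₂ t := by
            exact mul_le_mul_of_nonneg_right hl hγ₂.le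
        _ = γ₁ t := by field_simp
    · calc γ₁ t = (γ₁ t / γ₂ t) * γ₂ t := by field_simp
        _ ≤ b * γ₂ t := mul_le_mul_of_nonneg_right hr hγ₂.le
  have hcomp'' : ∀ t : ℝ, 0 < t → t < δ → b⁻¹ * γ₁ t ≤ γ₂ t ∧ γ₂ t ≤ a⁻¹ * γ₁ t := by
    intro t ht htδ
    obtain ⟨hl, hr⟩ := hcomp' t ht htδ
    constructor
    · rw [inv_mul_le_iff₀ hb]; exact hr
    · rw [le_inv_mul_iff₀ ha]; exact hl
  ext x
  constructor
  · exact aux_mono h₁ h₂ ha hb hδ hcomp' A x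
  · exact aux_mono h₂ h₁ (inv_pos.mpr hb) (inv_pos.mpr ha) hδ hcomp'' A x
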